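/- Let f : 2^D → ℝ be a normalized, monotone, submodular set function on a finite ground set D, and let k ≥ 1. Let S_greedy = S_k be the output of the greedy algorithm with budget k, and let S* be any subset of D with |S*| ≤ k maximizing f. Then f(S_greedy) ≥ (1 − 1/e) · f(S*). -/

import Mathlib

open Finset

lemma marg_sum' {ι : Type*} [DecidableEq ι]
    (f : Finset ι → ℝ)
    (hsub : ∀ A B : Finset ι, A ⊆ B → ∀ x ∉ B,
      f (insert x B) - f B ≤ f (insert x A) - f A)
    (A B : Finset ι) :
    f (A ∪ B) - f A ≤ ∑ y ∈ B \ A, (f (insert y A) - f A) := by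
  induction B using Finset.induction_on with
  | empty => simp
  | insert x B hx ih =>
    by_cases hxA : x ∈ A
    · have h1 : A ∪ insert x B = A ∪ B := by
        ext y; simp only [Finset.mem_union, Finset.mem_insert]
        constructor
        · rintro (h | rfl | h) <;> tauto
        · tauto
      have h2 : insert x B \ A = B \ A := by
        ext y; simp only [Finset.mem_sdiff, Finset.mem_insert]
        constructor
        · rintro ⟨rfl | h, h2⟩ <;> tauto
        · tauto
      rw [h1, h2]; exact ih
    · have h1 : A ∪ insert x B = insert x (A ∪ B) := Finset.union_insert x A B
      have h2 : insert x B \ A = insert x (B \ A) := by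
        ext y; simp only [Finset.mem_sdiff, Finset.mem_insert]
        constructor
        · rintro ⟨rfl | h, h2⟩ <;> tauto
        · rintro (rfl | ⟨h, h2⟩) <;> tauto
      have hxBA : x ∉ B \ A := by simp [hx]
      rw [h1, h2, Finset.sum_insert hxBA]
      have hsubm := hsub A (A ∪ B) Finset.subset_union_left x (by simp [hxA, hx])
      linarith

theorem greedy_classical_guarantee
    {ι : Type*} [Fintype ι] [DecidableEq ι]
    (f : Finset ι → ℝ)
    (hnorm : f ∅ = 0)
    (hmono : ∀ A B : Finset ι, A ⊆ B → f A ≤ f B)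
    (hsub : ∀ A B : Finset ι, A ⊆ B → ∀ x ∉ B,
      f (insert x B) - f B ≤ f (insert x A) - f A)
    (k : ℕ) (hk : 1 ≤ k)
    (S : ℕ → Finset ι) (hS0 : S 0 = ∅)
    (hgreedy : ∀ t < k, ∃ x ∉ S t, S (t + 1) = insert x (S t) ∧
      ∀ y ∉ S t, f (insert y (S t)) - f (S t) ≤ f (insert x (S t)) - f (S t))
    (Sstar : Finset ι) (hcard : Sstar.card ≤ k)
    (hopt : ∀ T : Finset ι, T.card ≤ k → f T ≤ f Sstar) :
    f (S k) ≥ (1 - 1 / Real.exp 1) * f Sstar := by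
  have hkR : (0:ℝ) < (k:ℝ) := by exact_mod_cast hk
  have hkne : (k:ℝ) ≠ 0 := ne_of_gt hkR
  have hf0 : (0:ℝ) ≤ f Sstar := by
    have := hmono ∅ Sstar (Finset.empty_subset _); linarith
  have hc : (0:ℝ) ≤ 1 - 1/(k:ℝ) := by
    rw [sub_nonneg, div_le_one hkR]; exact_mod_cast hk
  have step : ∀ t < k, f Sstar - f (S (t+1)) ≤ (1 - 1/(k:ℝ)) * (f Sstar - f (S t)) := by
    intro t ht
    obtain ⟨x, hxS, hSt1, hmax⟩ := hgreedy t ht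
    set g := f (insert x (S t)) - f (S t) with hg
    have hg0 : 0 ≤ g := by
      have := hmono (S t) (insert x (S t)) (Finset.subset_insert _ _); simp [hg]; linarith
    have h1 : f Sstar ≤ f (S t ∪ Sstar) := hmono _ _ Finset.subset_union_right
    have h2 := marg_sum' f hsub (S t) Sstar
    have h3 : ∑ y ∈ Sstar \ S t, (f (insert y (S t)) - f (S t))
        ≤ ((Sstar \ S t).card : ℝ) * g := by
      calc ∑ y ∈ Sstar \ S t, (f (insert y (S t)) - f (S t))
          ≤ ∑ _y ∈ Sstar \ S t, g :=
            Finset.sum_le_sum (fun y hy => hmax y (Finset.mem_sdiff.mp hy).2)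
        _ = ((Sstar \ S t).card : ℝ) * g := by
            rw [Finset.sum_const, nsmul_eq_mul]
    have hcard' : ((Sstar \ S t).card : ℝ) ≤ (k:ℝ) := by
      exact_mod_cast le_trans (Finset.card_le_card Finset.sdiff_subset) hcard
    have h4 : ((Sstar \ S t).card : ℝ) * g ≤ (k:ℝ) * g :=
      mul_le_mul_of_nonneg_right hcard' hg0
    have h5 : f Sstar - f (S t) ≤ (k:ℝ) * (f (S (t+1)) - f (S t)) := by
      rw [hSt1, ← hg]; linarith
    have h6 : f Sstar - f (S (t+1)) ≤ ((k:ℝ)-1)/(k:ℝ) * (f Sstar - f (S t)) := by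
      rw [div_mul_eq_mul_div, le_div_iff₀ hkR]; nlinarith
    have h7 : ((k:ℝ)-1)/(k:ℝ) = 1 - 1/(k:ℝ) := by field_simp
    rwa [h7] at h6
  have main : ∀ t, t ≤ k → f Sstar - f (S t) ≤ (1 - 1/(k:ℝ))^t * f Sstar := by
    intro t
    induction t with
    | zero => intro _; simp [hS0, hnorm]
    | succ n ih =>
      intro h
      have hn : n < k := h
      calc f Sstar - f (S (n+1)) ≤ (1 - 1/(k:ℝ)) * (f Sstar - f (S n)) := step n hn
        _ ≤ (1 - 1/(k:ℝ)) * ((1 - 1/(k:ℝ))^n * f Sstar) :=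
            mul_le_mul_of_nonneg_left (ih hn.le) hc
        _ = (1 - 1/(k:ℝ))^(n+1) * f Sstar := by ring
  have hpow : (1 - 1/(k:ℝ))^k ≤ 1 / Real.exp 1 := by
    have h1 : (1:ℝ) - 1/(k:ℝ) ≤ Real.exp (-(1/(k:ℝ))) := by
      linarith [Real.add_one_le_exp (-(1/(k:ℝ)))]
    calc (1 - 1/(k:ℝ))^k ≤ (Real.exp (-(1/(k:ℝ))))^k := pow_le_pow_left₀ hc h1 k
      _ = Real.exp ((k:ℝ) * (-(1/(k:ℝ)))) := (Real.exp_nat_mul _ k).symm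
      _ = Real.exp (-1) := by congr 1; field_simp
      _ = 1 / Real.exp 1 := by rw [Real.exp_neg, one_div]
  have hfin : f Sstar - f (S k) ≤ (1 / Real.exp 1) * f Sstar :=
    le_trans (main k le_rfl) (mul_le_mul_of_nonneg_right hpow hf0)
  rw [ge_iff_le, sub_mul, one_mul]
  linarith
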